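/- For every n and every m ≥ 1, in the graph G_n of the previous construction (x adjacent to p_i iff i mod 4 ∈ {0,1}, y adjacent to p_i iff i mod 4 ∈ {2,3}), the subgraph induced by {x} ∪ V(P) contains no cycle of length 4m (it is C_{4m}-subgraph-free); the same holds for {y} ∪ V(P). -/

import Mathlib

/-- `tdLE G n` : `G` admits an elimination-forest order whose chains have at most `n` vertices,
i.e. the treedepth of `G` is at most `n`. -/
def tdLE {V : Type*} (G : SimpleGraph V) (n : ℕ) : Prop :=
  ∃ le : V → V → Prop,
    (∀ v, le v v) ∧
    (∀ u v w, le u v → le v w → le u w) ∧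
    (∀ u v, le u v → le v u → u = v) ∧
    (∀ u v w, le u w → le v w → (le u v ∨ le v u)) ∧
    (∀ u v, G.Adj u v → (le u v ∨ le v u)) ∧
    (∀ s : Finset V, (∀ u ∈ s, ∀ v ∈ s, le u v ∨ le v u) → s.card ≤ n)

/-- The treedepth of a graph. -/
noncomputable def treedepth {V : Type*} (G : SimpleGraph V) : ℕ :=
  sInf {n | tdLE G n}

/-- `diamLE G d` : every two vertices of `G` are joined by a walk of length at most `d`. -/
def diamLE {V : Type*} (G : SimpleGraph V) (d : ℕ) : Prop :=
  ∀ u v : V, ∃ p : G.Walk u v, p.length ≤ d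

/-- `G` contains `H` as a subgraph. -/
def ContainsSub {V W : Type*} (G : SimpleGraph V) (H : SimpleGraph W) : Prop :=
  ∃ f : H →g G, Function.Injective f

/-- `G` contains `H` as an induced subgraph. -/
def ContainsInduced {V W : Type*} (G : SimpleGraph V) (H : SimpleGraph W) : Prop :=
  ∃ s : Set V, Nonempty ((G.induce s) ≃g H)

/-- The graph `G_n`: a path `p₀, …, p_n` (the vertices `Sum.inl i`) together with two extra
vertices `x = Sum.inr 0` and `y = Sum.inr 1`, where `x` is joined to `p_i` iff
`i mod 4 ∈ {0,1}` and `y` is joined to `p_i` iff `i mod 4 ∈ {2,3}`. -/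
def Gconstr (n : ℕ) : SimpleGraph (Fin (n + 1) ⊕ Fin 2) :=
  SimpleGraph.fromRel (fun a b =>
    (∃ i j : Fin (n + 1), a = Sum.inl i ∧ b = Sum.inl j ∧ (i : ℕ) + 1 = j) ∨
    (∃ i : Fin (n + 1), a = Sum.inr 0 ∧ b = Sum.inl i ∧
      ((i : ℕ) % 4 = 0 ∨ (i : ℕ) % 4 = 1)) ∨
    (∃ i : Fin (n + 1), a = Sum.inr 1 ∧ b = Sum.inl i ∧
      ((i : ℕ) % 4 = 2 ∨ (i : ℕ) % 4 = 3)))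

lemma Gconstr_adj_inl {n : ℕ} {i j : Fin (n+1)} :
    (Gconstr n).Adj (Sum.inl i) (Sum.inl j) ↔ ((i:ℕ)+1 = j ∨ (j:ℕ)+1 = i) := by
  simp only [Gconstr, SimpleGraph.fromRel_adj]
  constructor
  · rintro ⟨hne, h | h⟩ <;>
      rcases h with ⟨i', j', hi, hj, hIJ⟩ | ⟨i', hi, hj, _⟩ | ⟨i', hi, hj, _⟩ <;>
      simp_all
  · rintro (h | h)
    · exact ⟨by rintro heq; simp_all, Or.inl (Or.inl ⟨i, j, rfl, rfl, h⟩)⟩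
    · exact ⟨by rintro heq; simp_all, Or.inr (Or.inl ⟨j, i, rfl, rfl, h⟩)⟩

lemma Gconstr_adj_inr {n : ℕ} {w : Fin 2} {i : Fin (n+1)} :
    (Gconstr n).Adj (Sum.inr w) (Sum.inl i) ↔
      ((w = 0 ∧ ((i:ℕ) % 4 = 0 ∨ (i:ℕ) % 4 = 1)) ∨
       (w = 1 ∧ ((i:ℕ) % 4 = 2 ∨ (i:ℕ) % 4 = 3))) := by
  simp only [Gconstr, SimpleGraph.fromRel_adj]
  constructor
  · rintro ⟨hne, h | h⟩ <;>
      rcases h with ⟨i', j', hi, hj, hIJ⟩ | ⟨i', hi, hj, hm⟩ | ⟨i', hi, hj, hm⟩ <;>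
      simp_all
  · rintro (⟨rfl, hm⟩ | ⟨rfl, hm⟩)
    · exact ⟨by simp, Or.inl (Or.inr (Or.inl ⟨i, rfl, rfl, hm⟩))⟩
    · exact ⟨by simp, Or.inl (Or.inr (Or.inr ⟨i, rfl, rfl, hm⟩))⟩

lemma mono_steps (a : ℕ → ℕ) (N : ℕ) (hN : 1 ≤ N)
    (hstep : ∀ j, j < N → a (j+1) = a j + 1 ∨ a j = a (j+1) + 1)
    (hinj : ∀ j k, j ≤ N → k ≤ N → a j = a k → j = k) :
    a N = a 0 + N ∨ a 0 = a N + N := by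
  rcases hstep 0 hN with h0 | h0
  · left
    have up : ∀ j, j < N → a (j+1) = a j + 1 := by
      intro j
      induction j with
      | zero => intro _; exact h0
      | succ i ih =>
        intro hj
        have h1 := ih (by omega)
        rcases hstep (i+1) hj with h | h
        · exact h
        · exfalso
          have he : a (i+1+1) = a i := by omega
          have := hinj (i+1+1) i (by omega) (by omega) he
          omega
    have key : ∀ j, j ≤ N → a j = a 0 + j := by
      intro j
      induction j with
      | zero => intro _; rfl
      | succ i ih =>
        intro hj
        have := up i (by omega)
        have := ih (by omega)
        omega
    exact key N le_rfl
  · right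
    have down : ∀ j, j < N → a j = a (j+1) + 1 := by
      intro j
      induction j with
      | zero => intro _; exact h0
      | succ i ih =>
        intro hj
        have h1 := ih (by omega)
        rcases hstep (i+1) hj with h | h
        · exfalso
          have he : a (i+1+1) = a i := by omega
          have := hinj (i+1+1) i (by omega) (by omega) he
          omega
        · exact h
    have key : ∀ j, j ≤ N → a 0 = a j + j := by
      intro j
      induction j with
      | zero => intro _; rfl
      | succ i ih =>
        intro hj
        have := down i (by omega)
        have := ih (by omega)
        omega
    exact key N le_rfl

open Fin.NatCast

lemma key_lemma (n L : ℕ) (hL4 : L % 4 = 0) (h4 : 4 ≤ L)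
    (F : SimpleGraph.cycleGraph L →g Gconstr n) (hinj : Function.Injective F)
    (w : Fin 2) (hw : ∀ k, F k ≠ Sum.inr w) : False := by
  obtain ⟨l, rfl⟩ : ∃ l, L = l + 4 := ⟨L - 4, by omega⟩
  have hval : ∀ j : ℕ, j < l + 4 → ((j : Fin (l+4)) : ℕ) = j := by
    intro j hj
    simp [Fin.val_natCast, Nat.mod_eq_of_lt hj]
  have hcastinj : ∀ j j' : ℕ, j < l+4 → j' < l+4 →
      (j : Fin (l+4)) = (j' : Fin (l+4)) → j = j' := by
    intro j j' hj hj' h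
    have := congrArg Fin.val h
    rwa [hval j hj, hval j' hj'] at this
  have hAdj : ∀ v : Fin (l+4), (SimpleGraph.cycleGraph (l+4)).Adj v (v+1) := by
    intro v
    rw [SimpleGraph.cycleGraph_adj']
    right
    rw [add_sub_cancel_left]
    exact Fin.val_one (l+2)
  by_cases hx : ∃ k z, F k = Sum.inr z
  · -- the apex is used; it appears exactly once
    obtain ⟨k₀, z, hk₀⟩ := hx
    have hzw : z ≠ w := fun h => hw k₀ (h ▸ hk₀)
    set idx : ℕ → Fin (l+4) := fun j => k₀ + ((j+1 : ℕ) : Fin (l+4)) with hidx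
    have hne : ∀ j, j ≤ l+2 → idx j ≠ k₀ := by
      intro j hj h
      have hc : ((j+1:ℕ) : Fin (l+4)) = 0 := by
        have := h
        simp only [hidx] at this
        exact add_eq_left.mp this
      have := congrArg Fin.val hc
      rw [hval (j+1) (by omega)] at this
      simp at this
    have honly : ∀ j : ℕ, ∃ i : Fin (n+1), j ≤ l+2 → F (idx j) = Sum.inl i := by
      intro j
      by_cases hj : j ≤ l+2
      · cases hFj : F (idx j) with
        | inl i => exact ⟨i, fun _ => rfl⟩
        | inr z' =>
          exfalso
          have hz'w : z' ≠ w := fun h => hw (idx j) (h ▸ hFj)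
          have hz' : z' = z := by
            have h1 := z.is_lt; have h2 := z'.is_lt; have h3 := w.is_lt
            have h4 : z.val ≠ w.val := fun h => hzw (Fin.ext h)
            have h5 : z'.val ≠ w.val := fun h => hz'w (Fin.ext h)
            exact Fin.ext (by omega)
          have : F (idx j) = F k₀ := by rw [hFj, hk₀, hz']
          exact hne j hj (hinj this)
      · exact ⟨0, fun h => absurd h hj⟩
    choose g hg using honly
    set a : ℕ → ℕ := fun j => (g j).val with ha
    have e0 : a 0 = (g 0 : ℕ) := rfl
    have eN : a (l+2) = (g (l+2) : ℕ) := rfl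
    have hinj' : ∀ j j', j ≤ l+2 → j' ≤ l+2 → a j = a j' → j = j' := by
      intro j j' hj hj' h
      have h1 : g j = g j' := Fin.ext h
      have h2 : F (idx j) = F (idx j') := by rw [hg j hj, hg j' hj', h1]
      have h3 := hinj h2
      simp only [hidx] at h3
      have h4 := add_left_cancel h3
      have := hcastinj (j+1) (j'+1) (by omega) (by omega) h4
      omega
    have hidxsucc : ∀ j : ℕ, idx (j+1) = idx j + 1 := by
      intro j
      simp only [hidx]
      have : ((j+1+1 : ℕ) : Fin (l+4)) = ((j+1 : ℕ) : Fin (l+4)) + 1 := by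
        push_cast
        ring
      rw [this, add_assoc]
    have hstep : ∀ j, j < l+2 → a (j+1) = a j + 1 ∨ a j = a (j+1) + 1 := by
      intro j hj
      have hadj := F.map_adj (hAdj (idx j))
      rw [← hidxsucc j, hg j (by omega), hg (j+1) (by omega)] at hadj
      exact (Gconstr_adj_inl.mp hadj).imp Eq.symm Eq.symm
    have hN := mono_steps a (l+2) (by omega) hstep hinj'
    -- endpoints
    have hidx0 : idx 0 = k₀ + 1 := by
      simp only [hidx]
      norm_num
    have he0 : (Gconstr n).Adj (Sum.inr z) (Sum.inl (g 0)) := by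
      have h := F.map_adj (hAdj k₀)
      rw [← hidx0, hk₀, hg 0 (by omega)] at h
      exact h
    have hlast : idx (l+2) + 1 = k₀ := by
      simp only [hidx]
      rw [add_assoc]
      have h1 : ((l+2+1 : ℕ) : Fin (l+4)) + 1 = ((l+4 : ℕ) : Fin (l+4)) := by
        exact (Nat.cast_succ _).symm
      rw [h1, Fin.natCast_self, add_zero]
    have he1 : (Gconstr n).Adj (Sum.inl (g (l+2))) (Sum.inr z) := by
      have h := F.map_adj (hAdj (idx (l+2)))
      rw [hlast, hk₀, hg (l+2) le_rfl] at h
      exact h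
    have hc0 := Gconstr_adj_inr.mp he0
    have hc1 := Gconstr_adj_inr.mp he1.symm
    rcases hc0 with ⟨hz0, hm0⟩ | ⟨hz0, hm0⟩ <;> rcases hc1 with ⟨hz1, hm1⟩ | ⟨hz1, hm1⟩
    · omega
    · rw [hz0] at hz1; exact absurd hz1 (by decide)
    · rw [hz0] at hz1; exact absurd hz1 (by decide)
    · omega
  · -- no apex used: the cycle lives in the path
    push_neg at hx
    have honly : ∀ j : ℕ, ∃ i : Fin (n+1), j ≤ l+3 → F ((j : Fin (l+4))) = Sum.inl i := by
      intro j
      cases hFj : F ((j : Fin (l+4))) with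
      | inl i => exact ⟨i, fun _ => rfl⟩
      | inr z' => exact absurd hFj (hx _ z')
    choose g hg using honly
    set a : ℕ → ℕ := fun j => (g j).val with ha
    have e0 : a 0 = (g 0 : ℕ) := rfl
    have eN : a (l+3) = (g (l+3) : ℕ) := rfl
    have hinj' : ∀ j j', j ≤ l+3 → j' ≤ l+3 → a j = a j' → j = j' := by
      intro j j' hj hj' h
      have h1 : g j = g j' := Fin.ext h
      have h2 : F ((j : Fin (l+4))) = F ((j' : Fin (l+4))) := by
        rw [hg j hj, hg j' hj', h1]
      exact hcastinj j j' (by omega) (by omega) (hinj h2)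
    have hstep : ∀ j, j < l+3 → a (j+1) = a j + 1 ∨ a j = a (j+1) + 1 := by
      intro j hj
      have hsucc : ((j+1 : ℕ) : Fin (l+4)) = ((j : ℕ) : Fin (l+4)) + 1 := by
        push_cast
        ring
      have hadj := F.map_adj (hAdj ((j : Fin (l+4))))
      rw [← hsucc, hg j (by omega), hg (j+1) (by omega)] at hadj
      exact (Gconstr_adj_inl.mp hadj).imp Eq.symm Eq.symm
    have hN := mono_steps a (l+3) (by omega) hstep hinj'
    have hwrap : ((l+3 : ℕ) : Fin (l+4)) + 1 = ((0 : ℕ) : Fin (l+4)) := by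
      have h1 : ((l+3 : ℕ) : Fin (l+4)) + 1 = ((l+4 : ℕ) : Fin (l+4)) := by
        exact (Nat.cast_succ _).symm
      rw [h1, Fin.natCast_self]
      simp
    have hadj := F.map_adj (hAdj ((l+3 : ℕ) : Fin (l+4)))
    rw [hwrap, hg (l+3) le_rfl, hg 0 (by omega)] at hadj
    have := Gconstr_adj_inl.mp hadj
    omega

/-- For every `m ≥ 1`, the subgraph of `G_n` induced by `{x} ∪ V(P)` contains no cycle of
length `4m`, and likewise for `{y} ∪ V(P)`. -/
theorem Gconstr_induce_cycle_free (n m : ℕ) (hm : 1 ≤ m) :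
    ¬ ContainsSub ((Gconstr n).induce {v | v ≠ Sum.inr 1})
        (SimpleGraph.cycleGraph (4 * m)) ∧
    ¬ ContainsSub ((Gconstr n).induce {v | v ≠ Sum.inr 0})
        (SimpleGraph.cycleGraph (4 * m)) := by
  have main : ∀ (w : Fin 2), ¬ ContainsSub ((Gconstr n).induce {v | v ≠ Sum.inr w})
      (SimpleGraph.cycleGraph (4 * m)) := by
    intro w
    rintro ⟨f, hfinj⟩
    let F : SimpleGraph.cycleGraph (4 * m) →g Gconstr n :=
      ⟨fun k => (f k).val, fun {a b} h => f.map_adj h⟩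
    have hFinj : Function.Injective F := fun a b h => hfinj (Subtype.ext h)
    exact key_lemma n (4 * m) (by omega) (by omega) F hFinj w (fun k => (f k).prop)
  exact ⟨main 1, main 0⟩
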